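/- For the matrix Y_ρ{}^α := 2ig ψ̄^a_A g^{AB} ψ_{bC} (e_ρ)_a{}^b (t^α)_B{}^C built from Grassmann bilinears, the product Y_ρ{}^β Y^σ{}_β equals M(J)_ρ{}^σ := 4g² ( (2/3) J^a{}_b J^c{}_d + 2 J^a{}_d J^c{}_b ) (e_ρ)_a{}^b (e^σ)_c{}^d. -/

import Mathlib

open Finset

/-- The bispinor symplectic form `ε_{ab}`. -/
noncomputable def epsBi : Matrix (Fin 4) (Fin 4) ℂ :=
  !![0,1,0,0; -1,0,0,0; 0,0,0,-1; 0,0,1,0]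

/-- The basis `e_ρ`, `ρ = 1,…,8`, of the off-diagonal 2×2 blocks of 4×4 matrices. -/
noncomputable def eBasis : Fin 8 → Matrix (Fin 4) (Fin 4) ℂ :=
  ![Matrix.single 0 2 1, Matrix.single 0 3 1,
    Matrix.single 1 2 1, Matrix.single 1 3 1,
    Matrix.single 2 0 1, Matrix.single 2 1 1,
    Matrix.single 3 0 1, Matrix.single 3 1 1]

/-- The eight Gell-Mann matrices. -/
noncomputable def gellMann : Fin 8 → Matrix (Fin 3) (Fin 3) ℂ :=
  ![!![0,1,0; 1,0,0; 0,0,0],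
    !![0,-Complex.I,0; Complex.I,0,0; 0,0,0],
    !![1,0,0; 0,-1,0; 0,0,0],
    !![0,0,1; 0,0,0; 1,0,0],
    !![0,0,-Complex.I; 0,0,0; Complex.I,0,0],
    !![0,0,0; 0,0,1; 0,1,0],
    !![0,0,0; 0,0,-Complex.I; 0,Complex.I,0],
    ((Real.sqrt 3 : ℂ))⁻¹ • !![1,0,0; 0,1,0; 0,0,-2]]

set_option maxHeartbeats 2000000 in
lemma gm_complete (B C D E : Fin 3) :
    ∑ α : Fin 8, gellMann α B C * gellMann α D E =
      2 * (if B = E then 1 else 0) * (if D = C then 1 else 0)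
        - (2/3) * (if B = C then 1 else 0) * (if D = E then 1 else 0) := by
  have h3 : ((Real.sqrt 3 : ℂ))⁻¹ * ((Real.sqrt 3 : ℂ))⁻¹ = 1/3 := by
    rw [← mul_inv]
    norm_num [← Complex.ofReal_mul, Real.mul_self_sqrt]
  have h3' : ((Real.sqrt 3 : ℂ))⁻¹ ^ 2 = 1/3 := by rw [sq]; exact h3
  fin_cases B <;> fin_cases C <;> fin_cases D <;> fin_cases E <;>
    simp [gellMann, Fin.sum_univ_succ, Matrix.cons_val_zero, Matrix.cons_val_succ, h3,
      Complex.I_mul_I, Matrix.vecHead, Matrix.vecTail] <;>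
    (try (ring_nf; simp [h3, h3', Complex.I_sq])) <;> (try ring_nf)

lemma sum_ite_const {ι M : Type*} [AddCommMonoid M] (s : Finset ι) (p : Prop) [Decidable p]
    (f : ι → M) : (∑ i ∈ s, if p then f i else 0) = if p then ∑ i ∈ s, f i else 0 := by
  split_ifs <;> simp

lemma sum_swap4 {M : Type*} [AddCommMonoid M] (f : Fin 4 → Fin 4 → Fin 4 → Fin 4 → M) :
    ∑ c : Fin 4, ∑ d : Fin 4, ∑ a : Fin 4, ∑ b : Fin 4, f a b c d
      = ∑ a : Fin 4, ∑ b : Fin 4, ∑ c : Fin 4, ∑ d : Fin 4, f a b c d :=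
  calc ∑ c : Fin 4, ∑ d : Fin 4, ∑ a : Fin 4, ∑ b : Fin 4, f a b c d
      = ∑ c : Fin 4, ∑ a : Fin 4, ∑ d : Fin 4, ∑ b : Fin 4, f a b c d :=
        Finset.sum_congr rfl fun _ _ => Finset.sum_comm
    _ = ∑ a : Fin 4, ∑ c : Fin 4, ∑ d : Fin 4, ∑ b : Fin 4, f a b c d := Finset.sum_comm
    _ = ∑ a : Fin 4, ∑ c : Fin 4, ∑ b : Fin 4, ∑ d : Fin 4, f a b c d :=
        Finset.sum_congr rfl fun _ _ => Finset.sum_congr rfl fun _ _ => Finset.sum_comm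
    _ = ∑ a : Fin 4, ∑ b : Fin 4, ∑ c : Fin 4, ∑ d : Fin 4, f a b c d :=
        Finset.sum_congr rfl fun _ _ => Finset.sum_comm

set_option maxHeartbeats 4000000 in
/-- for `Y_ρ{}^α = 2ig ψ̄^a_A g^{AB} ψ_{bC} (e_ρ)_a{}^b (t^α)_B{}^C`,
one has `Y_ρ{}^β Y^σ{}_β = M(J)_ρ{}^σ
  = 4g²((2/3) J^a{}_b J^c{}_d + 2 J^a{}_d J^c{}_b)(e_ρ)_a{}^b (e^σ)_c{}^d`. -/
theorem Y_mul_Y {Λ : Type*} [Ring Λ] [Algebra ℂ Λ] (g : ℝ)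
    (ψ ψbar : Fin 4 → Fin 3 → Λ)
    (hψψ : ∀ a i b j, ψ a i * ψ b j = -(ψ b j * ψ a i))
    (hψbψb : ∀ a i b j, ψbar a i * ψbar b j = -(ψbar b j * ψbar a i))
    (hψψb : ∀ a i b j, ψ a i * ψbar b j = -(ψbar b j * ψ a i))
    (ψlow : Fin 4 → Fin 3 → Λ)
    (hψlow : ∀ b C, ψlow b C = ∑ c, epsBi c b • ψ c C)
    (J : Fin 4 → Fin 4 → Λ)
    (hJ : ∀ a b, J a b = ∑ A : Fin 3, ψbar a A * ψ b A)
    (Jm : Fin 4 → Fin 4 → Λ)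
    (hJm : ∀ a b, Jm a b = ∑ c, epsBi c b • J a c)
    (Y : Fin 8 → Fin 8 → Λ)
    (hY : ∀ ρ α, Y ρ α = (2 * (g : ℂ) * Complex.I) •
      ∑ a, ∑ b, ∑ B, ∑ C, (eBasis ρ a b * gellMann α B C) • (ψbar a B * ψlow b C)) :
    ∀ ρ σ : Fin 8,
      ∑ α : Fin 8, Y ρ α * Y σ α =
        (4 * (g : ℂ) ^ 2) • ∑ a, ∑ b, ∑ c, ∑ d,
          (((2 / 3) * eBasis ρ a b * eBasis σ c d) • (Jm a b * Jm c d)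
            + (2 * eBasis ρ a b * eBasis σ c d) • (Jm a d * Jm c b)) := by
  intro ρ σ
  classical
  -- `Jm` as a sum of bilinears in `ψbar`, `ψlow`
  have hJmS : ∀ a b, Jm a b = ∑ B : Fin 3, ψbar a B * ψlow b B := by
    intro a b
    simp only [hJm, hJ, hψlow, Finset.smul_sum, Finset.mul_sum, mul_smul_comm]
    exact Finset.sum_comm
  -- extended anticommutation relations
  have hψl : ∀ a C d E, ψ a C * ψlow d E = -(ψlow d E * ψ a C) := by
    intro a C d E
    rw [hψlow, Finset.mul_sum, Finset.sum_mul, ← Finset.sum_neg_distrib]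
    exact Finset.sum_congr rfl fun e _ => by
      rw [mul_smul_comm, smul_mul_assoc, hψψ, smul_neg]
  have hlψb : ∀ b C c D, ψlow b C * ψbar c D = -(ψbar c D * ψlow b C) := by
    intro b C c D
    rw [hψlow, Finset.sum_mul, Finset.mul_sum, ← Finset.sum_neg_distrib]
    exact Finset.sum_congr rfl fun e _ => by
      rw [smul_mul_assoc, hψψb, mul_smul_comm, smul_neg]
  have hll : ∀ b C d E, ψlow b C * ψlow d E = -(ψlow d E * ψlow b C) := by
    intro b C d E
    rw [hψlow b, Finset.sum_mul, Finset.mul_sum, ← Finset.sum_neg_distrib]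
    exact Finset.sum_congr rfl fun e _ => by
      rw [smul_mul_assoc, hψl, mul_smul_comm, smul_neg]
  -- the basic reordering identity
  have hR : ∀ a B b C c D d E,
      ψbar a B * ψlow b C * (ψbar c D * ψlow d E)
        = -(ψbar a B * ψlow d E * (ψbar c D * ψlow b C)) := by
    intro a B b C c D d E
    calc ψbar a B * ψlow b C * (ψbar c D * ψlow d E)
        = ψbar a B * ((ψlow b C * ψbar c D) * ψlow d E) := by
          rw [mul_assoc, ← mul_assoc (ψlow b C)]
      _ = -(ψbar a B * (ψbar c D * (ψlow b C * ψlow d E))) := by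
          rw [hlψb, neg_mul, mul_neg, mul_assoc]
      _ = ψbar a B * (ψbar c D * (ψlow d E * ψlow b C)) := by
          rw [hll, mul_neg, mul_neg, neg_neg]
      _ = -(ψbar a B * ψlow d E * (ψbar c D * ψlow b C)) := by
          rw [mul_assoc (ψbar a B) (ψlow d E), ← mul_assoc (ψlow d E), hlψb,
            neg_mul, mul_neg, neg_neg, mul_assoc (ψbar c D)]
  have hbl : ∀ c D b C, ψbar c D * ψlow b C = -(ψlow b C * ψbar c D) := by
    intro c D b C; rw [hlψb, neg_neg]
  have hcomm1 : ∀ b C c D d E,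
      ψlow b C * (ψbar c D * ψlow d E) = ψbar c D * ψlow d E * ψlow b C := by
    intro b C c D d E
    rw [← mul_assoc, hlψb, neg_mul, mul_assoc, hll, mul_neg, neg_neg, ← mul_assoc]
  have hcomm2 : ∀ a B c D d E,
      ψbar a B * (ψbar c D * ψlow d E) = ψbar c D * ψlow d E * ψbar a B := by
    intro a B c D d E
    rw [← mul_assoc, hψbψb, neg_mul, mul_assoc, hbl, mul_neg, neg_neg, ← mul_assoc]
  have hcomm : ∀ a B b C c D d E,
      ψbar c D * ψlow d E * (ψbar a B * ψlow b C)
        = ψbar a B * ψlow b C * (ψbar c D * ψlow d E) := by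
    intro a B b C c D d E
    conv_rhs => rw [mul_assoc, hcomm1, ← mul_assoc, hcomm2, mul_assoc]
  have hK : (2*(g:ℂ)*Complex.I) * (2*(g:ℂ)*Complex.I) = -(4*(g:ℂ)^2) := by
    have h := Complex.I_mul_I
    calc (2*(g:ℂ)*Complex.I) * (2*(g:ℂ)*Complex.I)
        = (Complex.I * Complex.I) * (4*(g:ℂ)^2) := by ring
      _ = -(4*(g:ℂ)^2) := by rw [h]; ring
  have hA : ∀ α : Fin 8, Y ρ α * Y σ α =
      ∑ c, ∑ d, ∑ D, ∑ E, ∑ a, ∑ b, ∑ B, ∑ C,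
        ((-(4*(g:ℂ)^2) * (eBasis ρ a b * eBasis σ c d)) * (gellMann α B C * gellMann α D E)) •
          ((ψbar a B * ψlow b C) * (ψbar c D * ψlow d E)) := by
    intro α
    rw [hY ρ, hY σ, smul_mul_smul_comm, hK]
    simp only [Finset.smul_sum, Finset.sum_mul, Finset.mul_sum, smul_mul_assoc,
      mul_smul_comm, smul_smul]
    refine Finset.sum_congr rfl fun a _ => Finset.sum_congr rfl fun b _ =>
      Finset.sum_congr rfl fun B _ => Finset.sum_congr rfl fun C _ =>
      Finset.sum_congr rfl fun c _ => Finset.sum_congr rfl fun d _ =>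
      Finset.sum_congr rfl fun D _ => Finset.sum_congr rfl fun E _ => ?_
    congr 1
    ring
  have hB : ∑ α : Fin 8, Y ρ α * Y σ α =
      ∑ c, ∑ d, ∑ D, ∑ E, ∑ a, ∑ b, ∑ B, ∑ C,
        ((-(4*(g:ℂ)^2) * (eBasis ρ a b * eBasis σ c d)) *
            ∑ α : Fin 8, gellMann α B C * gellMann α D E) •
          ((ψbar a B * ψlow b C) * (ψbar c D * ψlow d E)) := by
    simp only [hA]
    simp only [Finset.sum_comm (γ := Fin 8) (α := Fin 4) (β := Λ),
      Finset.sum_comm (γ := Fin 8) (α := Fin 3) (β := Λ)]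
    simp only [← Finset.sum_smul, ← Finset.mul_sum]
  rw [hB]
  simp only [gm_complete]
  simp only [mul_sub, sub_smul, Finset.sum_sub_distrib]
  simp only [mul_ite, ite_mul, mul_one, mul_zero, one_mul, zero_mul, ite_smul, zero_smul,
    sum_ite_const, Finset.sum_ite_eq, Finset.sum_ite_eq', Finset.mem_univ, if_true,
    Finset.sum_const_zero]
  have hP1 : ∑ c, ∑ d, ∑ C : Fin 3, ∑ a, ∑ b, ∑ B : Fin 3,
        (-(4*(g:ℂ)^2) * (eBasis ρ a b * eBasis σ c d) * (2/3)) •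
          (ψbar a B * ψlow b B * (ψbar c C * ψlow d C))
      = ∑ a, ∑ b, ∑ c, ∑ d,
        (-(4*(g:ℂ)^2) * (eBasis ρ a b * eBasis σ c d) * (2/3)) • (Jm a b * Jm c d) := by
    simp only [Finset.sum_comm (γ := Fin 3) (α := Fin 4) (β := Λ)]
    rw [sum_swap4]
    refine Finset.sum_congr rfl fun a _ => Finset.sum_congr rfl fun b _ =>
      Finset.sum_congr rfl fun c _ => Finset.sum_congr rfl fun d _ => ?_
    rw [hJmS a b, hJmS c d, Finset.sum_mul_sum]
    simp only [Finset.smul_sum]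
    exact Finset.sum_comm
  have hP2a : ∑ c, ∑ d, ∑ C : Fin 3, ∑ B : Fin 3, ∑ a, ∑ b,
        (-(4*(g:ℂ)^2) * (eBasis ρ a b * eBasis σ c d) * 2) •
          (ψbar a B * ψlow b C * (ψbar c C * ψlow d B))
      = ∑ c, ∑ d, ∑ C : Fin 3, ∑ B : Fin 3, ∑ a, ∑ b,
        ((4*(g:ℂ)^2) * (eBasis ρ a b * eBasis σ c d) * 2) •
          (ψbar a B * ψlow d B * (ψbar c C * ψlow b C)) := by
    refine Finset.sum_congr rfl fun c _ => Finset.sum_congr rfl fun d _ =>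
      Finset.sum_congr rfl fun C _ => Finset.sum_congr rfl fun B _ =>
      Finset.sum_congr rfl fun a _ => Finset.sum_congr rfl fun b _ => ?_
    rw [hR, smul_neg, ← neg_smul]
    congr 1
    ring
  have hP2 : ∑ c, ∑ d, ∑ C : Fin 3, ∑ B : Fin 3, ∑ a, ∑ b,
        ((4*(g:ℂ)^2) * (eBasis ρ a b * eBasis σ c d) * 2) •
          (ψbar a B * ψlow d B * (ψbar c C * ψlow b C))
      = ∑ a, ∑ b, ∑ c, ∑ d,
        ((4*(g:ℂ)^2) * (eBasis ρ a b * eBasis σ c d) * 2) • (Jm a d * Jm c b) := by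
    simp only [Finset.sum_comm (γ := Fin 3) (α := Fin 4) (β := Λ)]
    rw [sum_swap4]
    refine Finset.sum_congr rfl fun a _ => Finset.sum_congr rfl fun b _ =>
      Finset.sum_congr rfl fun c _ => Finset.sum_congr rfl fun d _ => ?_
    rw [hJmS a d, hJmS c b, Finset.sum_mul_sum]
    simp only [Finset.smul_sum]
    exact Finset.sum_comm
  rw [hP2a, hP2, hP1]
  simp only [Finset.smul_sum, smul_add, smul_smul, ← Finset.sum_sub_distrib]
  refine Finset.sum_congr rfl fun a _ => Finset.sum_congr rfl fun b _ =>
    Finset.sum_congr rfl fun c _ => Finset.sum_congr rfl fun d _ => ?_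
  rw [sub_eq_add_neg, ← neg_smul, add_comm]
  congr 1 <;> (congr 1; ring)
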